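/- Let N ≥ 1 and define the quantum conditional distribution P_{XY|AB} with inputs A ∈ {0,2,...,2N−2}, B ∈ {1,3,...,2N−1} and binary outcomes by measuring the state ψ = (e_{00} + e_{11})/√2 with projections onto u(θ_a), u⊥(θ_a) on the first system and u(θ_b), u⊥(θ_b) on the second, where θ_i = iπ/(2N), u(θ) = (cos(θ/2), sin(θ/2)), u⊥(θ) = (sin(θ/2), −cos(θ/2)). Then the chained Bell quantity of this distribution equals I_N = 2N·sin²(π/(4N)). -/

import Mathlib

open Finset Real

noncomputable section

/-- The chained Bell quantity `I_N` of a bipartite conditional distribution.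
Alice's input `a : Fin N` stands for the measurement `2a ∈ {0,2,…,2N-2}` and Bob's input
`b : Fin N` stands for `2b+1 ∈ {1,3,…,2N-1}`; thus `|2a - (2b+1)| = 1` iff `a = b ∨ a = b+1`.
`I_N = ∑_{a,b : |a-b|=1} ∑_x P(x, x̄ | a, b) + ∑_x P(x, x | 0, 2N-1)`, where `x̄ = 1 - x`. -/
def chainedBell (N : ℕ) (hN : 0 < N) (P : Fin N → Fin N → Fin 2 → Fin 2 → ℝ) : ℝ :=
  (∑ a : Fin N, ∑ b : Fin N,
      if (a : ℕ) = (b : ℕ) ∨ (a : ℕ) = (b : ℕ) + 1 then ∑ x : Fin 2, P a b x (1 - x) else 0)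
    + ∑ x : Fin 2, P ⟨0, hN⟩ ⟨N - 1, by omega⟩ x x

/-- The measurement basis at angle `θ`: outcome `0` corresponds to `u(θ) = (cos(θ/2), sin(θ/2))`
and outcome `1` to `u⊥(θ) = (sin(θ/2), -cos(θ/2))`. -/
def measVec (θ : ℝ) : Fin 2 → Fin 2 → ℂ :=
  fun x i =>
    if x = 0 then (if i = 0 then (Real.cos (θ / 2) : ℂ) else (Real.sin (θ / 2) : ℂ))
    else (if i = 0 then (Real.sin (θ / 2) : ℂ) else (-Real.cos (θ / 2) : ℂ))

/-- The maximally entangled state `ψ = (e₀₀ + e₁₁)/√2`, as a vector in `ℂ² ⊗ ℂ² ≅ ℂ⁴`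
indexed by pairs `(i,j)`. -/
def psi : Fin 2 → Fin 2 → ℂ :=
  fun i j => if i = j then ((1 / Real.sqrt 2 : ℝ) : ℂ) else 0

/-- The quantum conditional distribution obtained by measuring `ψ` with the bases at angles
`θ_{2a} = 2a·π/(2N)` (Alice) and `θ_{2b+1} = (2b+1)·π/(2N)` (Bob); the Born rule gives
outcome pair `(x,y)` probability `|⟨v_x ⊗ w_y, ψ⟩|²`. -/
def quantumP (N : ℕ) (a b : Fin N) (x y : Fin 2) : ℝ :=
  ‖(∑ i : Fin 2, ∑ j : Fin 2,
      (starRingEnd ℂ) (measVec ((2 * (a : ℕ)) * π / (2 * N)) x i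
        * measVec ((2 * (b : ℕ) + 1) * π / (2 * N)) y j) * psi i j)‖ ^ 2

/-- Born rule for the singlet-type state: the outcome probability only depends on the
difference of angles. -/
lemma born (α β : ℝ) (x y : Fin 2) :
    ‖(∑ i : Fin 2, ∑ j : Fin 2,
      (starRingEnd ℂ) (measVec α x i * measVec β y j) * psi i j)‖ ^ 2
    = (if x = y then Real.cos ((α - β) / 2) else Real.sin ((α - β) / 2)) ^ 2 / 2 := by
  have hs2 : Real.sqrt 2 ^ 2 = 2 := Real.sq_sqrt (by norm_num)
  have hs : Real.sqrt 2 ≠ 0 := by positivity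
  have hab : (α - β) / 2 = α / 2 - β / 2 := by ring
  fin_cases x <;> fin_cases y <;>
    simp [measVec, psi, Fin.sum_univ_two, ← Complex.ofReal_ofNat,
      ← Complex.ofReal_div, ← Complex.ofReal_cos, ← Complex.ofReal_sin,
      Complex.conj_ofReal, ← Complex.ofReal_inv, ← Complex.ofReal_mul,
      ← Complex.ofReal_add, ← Complex.ofReal_neg, Complex.norm_real, Real.norm_eq_abs, sq_abs] <;>
    rw [hab] <;>
    [rw [Real.cos_sub]; rw [Real.sin_sub]; rw [Real.sin_sub]; rw [Real.cos_sub]] <;>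
    field_simp <;> rw [hs2] <;> ring

lemma countAux (c : ℝ) (N : ℕ) :
    ∑ a ∈ Finset.range N, ∑ b ∈ Finset.range N,
      (if a = b ∨ a = b + 1 then c else 0) = (2 * N - 1 : ℕ) * c := by
  induction N with
  | zero => simp
  | succ n ih =>
    rw [Finset.sum_range_succ]
    simp only [Finset.sum_range_succ]
    rw [Finset.sum_add_distrib, ih]
    have h1 : ∑ a ∈ Finset.range n, (if a = n ∨ a = n + 1 then c else 0) = 0 := by
      apply Finset.sum_eq_zero
      intro a ha
      rw [Finset.mem_range] at ha
      rw [if_neg (by omega)]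
    have h2 : ∑ b ∈ Finset.range n, (if n = b ∨ n = b + 1 then c else 0)
        = if n = 0 then 0 else c := by
      rcases Nat.eq_zero_or_pos n with h | h
      · simp [h]
      · rw [if_neg (by omega)]
        have : ∀ b ∈ Finset.range n, (if n = b ∨ n = b + 1 then c else 0)
            = if b = n - 1 then c else 0 := by
          intro b hb
          rw [Finset.mem_range] at hb
          congr 1
          simp only [eq_iff_iff]
          omega
        rw [Finset.sum_congr rfl this, Finset.sum_ite_eq' (Finset.range n) (n-1)]
        rw [if_pos (Finset.mem_range.mpr (by omega))]
    rw [h1, h2]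
    simp only [true_or, if_true]
    rcases Nat.eq_zero_or_pos n with h | h
    · simp [h]
    · rw [if_neg (by omega)]
      have : (2 * (n + 1) - 1 : ℕ) = (2 * n - 1) + 2 := by omega
      rw [this]
      push_cast [Nat.cast_sub (by omega : 1 ≤ 2 * n)]
      ring

/-- The chained Bell quantity of the quantum distribution obtained by measuring
the maximally entangled state at angles `θ_i = iπ/(2N)` equals `2N·sin²(π/(4N))`. -/
theorem chainedBell_quantum_value (N : ℕ) (hN : 0 < N) :
    chainedBell N hN (quantumP N) = 2 * N * Real.sin (π / (4 * N)) ^ 2 := by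
  have hN' : (N : ℝ) ≠ 0 := Nat.cast_ne_zero.mpr hN.ne'
  set c := Real.sin (π / (4 * N)) ^ 2 with hc
  -- probabilities of unequal outcomes for neighbouring angles
  have hterm : ∀ a b : Fin N, ((a : ℕ) = (b : ℕ) ∨ (a : ℕ) = (b : ℕ) + 1) →
      ∑ x : Fin 2, quantumP N a b x (1 - x) = c := by
    intro a b hab
    rw [Fin.sum_univ_two]
    rw [show (1 - (0 : Fin 2)) = 1 from rfl, show (1 - (1 : Fin 2)) = 0 from rfl]
    unfold quantumP
    rw [born, born]
    rw [if_neg (by decide : ¬((0 : Fin 2) = 1)), if_neg (by decide : ¬((1 : Fin 2) = 0))]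
    rcases hab with h | h
    · have hb : (a : ℝ) = (b : ℝ) := by exact_mod_cast h
      have hD : ((2 * (a : ℕ) : ℝ) * π / (2 * N) - (2 * (b : ℕ) + 1) * π / (2 * N)) / 2
          = -(π / (4 * N)) := by
        rw [hb]
        field_simp
        ring
      rw [hD, Real.sin_neg, neg_sq, hc]
      ring
    · have hb : (a : ℝ) = (b : ℝ) + 1 := by exact_mod_cast h
      have hD : ((2 * (a : ℕ) : ℝ) * π / (2 * N) - (2 * (b : ℕ) + 1) * π / (2 * N)) / 2
          = π / (4 * N) := by
        rw [hb]
        field_simp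
        ring
      rw [hD, hc]
      ring
  -- the extreme term
  have hlast : ∑ x : Fin 2, quantumP N ⟨0, hN⟩ ⟨N - 1, by omega⟩ x x = c := by
    rw [Fin.sum_univ_two]
    unfold quantumP
    rw [born, born]
    rw [if_pos rfl, if_pos rfl]
    have hD : ((2 * ((⟨0, hN⟩ : Fin N) : ℕ) : ℝ) * π / (2 * N)
        - (2 * ((⟨N - 1, by omega⟩ : Fin N) : ℕ) + 1) * π / (2 * N)) / 2
        = -(π / 2 - π / (4 * N)) := by
      show ((2 * ((0 : ℕ) : ℝ)) * π / (2 * N) - (2 * ((N - 1 : ℕ) : ℝ) + 1) * π / (2 * N)) / 2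
        = -(π / 2 - π / (4 * N))
      rw [Nat.cast_sub hN]
      push_cast
      field_simp
      ring
    rw [hD, Real.cos_neg, Real.cos_pi_div_two_sub, hc]
    ring
  unfold chainedBell
  rw [hlast]
  have hsum : (∑ a : Fin N, ∑ b : Fin N,
      if (a : ℕ) = (b : ℕ) ∨ (a : ℕ) = (b : ℕ) + 1 then
        ∑ x : Fin 2, quantumP N a b x (1 - x) else 0)
      = ∑ a ∈ Finset.range N, ∑ b ∈ Finset.range N, (if a = b ∨ a = b + 1 then c else 0) := by
    have h1 : (∑ a : Fin N, ∑ b : Fin N,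
        if (a : ℕ) = (b : ℕ) ∨ (a : ℕ) = (b : ℕ) + 1 then
          ∑ x : Fin 2, quantumP N a b x (1 - x) else 0)
        = ∑ a : Fin N, ∑ b : Fin N,
          (if (a : ℕ) = (b : ℕ) ∨ (a : ℕ) = (b : ℕ) + 1 then c else 0) := by
      refine Finset.sum_congr rfl fun a _ => Finset.sum_congr rfl fun b _ => ?_
      split_ifs with h
      · exact hterm a b h
      · rfl
    rw [h1]
    rw [Fin.sum_univ_eq_sum_range (fun a => ∑ b : Fin N,
      (if a = (b : ℕ) ∨ a = (b : ℕ) + 1 then c else 0)) N]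
    exact Finset.sum_congr rfl fun a _ =>
      Fin.sum_univ_eq_sum_range (fun b => if a = b ∨ a = b + 1 then c else 0) N
  rw [hsum, countAux]
  rw [Nat.cast_sub (by omega : 1 ≤ 2 * N)]
  push_cast
  ring

end
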